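/- Let ψ(w) = (1−w)(e^{−2πiw} + e^{−4πiw}) + (1/(3πi))(1 − e^{−6πiw}) for w ∈ [0,1]. Then for w ∈ [0,1/3], |ψ(w)| = 2(1−w)cos(πw) + (2/(3π))sin(3πw). -/

import Mathlib

open Real

/-- The Fourier transform of the localizing function `φ` on `[0,1]`. -/
noncomputable def psi (w : ℝ) : ℂ :=
  (1 - (w : ℂ)) * (Complex.exp (-2 * (π : ℂ) * Complex.I * (w : ℂ)) +
      Complex.exp (-4 * (π : ℂ) * Complex.I * (w : ℂ))) +
    (1 / (3 * (π : ℂ) * Complex.I)) * (1 - Complex.exp (-6 * (π : ℂ) * Complex.I * (w : ℂ)))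

theorem abs_psi_eq (w : ℝ) (hw : w ∈ Set.Icc (0 : ℝ) (1 / 3)) :
    ‖psi w‖ = 2 * (1 - w) * Real.cos (π * w) + (2 / (3 * π)) * Real.sin (3 * π * w) := by
  obtain ⟨hw0, hw1⟩ := hw
  have hπ : (0:ℝ) < π := Real.pi_pos
  have hπC : (π:ℂ) ≠ 0 := by exact_mod_cast hπ.ne'
  set E : ℂ := Complex.exp (-(π:ℂ) * Complex.I * w) with hEdef
  have hE : E ≠ 0 := Complex.exp_ne_zero _
  have hp : ∀ n : ℕ, E ^ n = Complex.exp ((n : ℂ) * (-(π:ℂ) * Complex.I * w)) :=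
    fun n => (Complex.exp_nat_mul _ n).symm
  have h2 : Complex.exp (-2 * (π:ℂ) * Complex.I * w) = E ^ 2 := by
    rw [hp]; congr 1; push_cast; ring
  have h4 : Complex.exp (-4 * (π:ℂ) * Complex.I * w) = E ^ 4 := by
    rw [hp]; congr 1; push_cast; ring
  have h6 : Complex.exp (-6 * (π:ℂ) * Complex.I * w) = E ^ 6 := by
    rw [hp]; congr 1; push_cast; ring
  have h3 : Complex.exp (-3 * (π:ℂ) * Complex.I * w) = E ^ 3 := by
    rw [hp]; congr 1; push_cast; ring
  have hinv : Complex.exp ((π:ℂ) * w * Complex.I) = E⁻¹ := by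
    rw [hEdef, ← Complex.exp_neg]; congr 1; ring
  have hinv3 : Complex.exp ((3 * (π:ℂ) * w) * Complex.I) = (E ^ 3)⁻¹ := by
    rw [hp, ← Complex.exp_neg]; congr 1; push_cast; ring
  have hneg : Complex.exp (-((π:ℂ) * w) * Complex.I) = E := by
    rw [hEdef]; congr 1; ring
  have hneg3 : Complex.exp (-(3 * (π:ℂ) * w) * Complex.I) = E ^ 3 := by
    rw [hp]; congr 1; push_cast; ring
  have hcos : Complex.cos ((π:ℂ) * w) = (E⁻¹ + E) / 2 := by
    have := Complex.two_cos ((π : ℂ) * w)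
    rw [hinv, hneg] at this
    linear_combination this / 2
  have hsin : Complex.sin (3 * (π:ℂ) * w) = (E ^ 3 - (E ^ 3)⁻¹) * Complex.I / 2 := by
    have := Complex.two_sin (3 * (π : ℂ) * w)
    rw [hinv3, hneg3] at this
    linear_combination this / 2
  have key : psi w = E ^ 3 *
      ((2 * (1 - w) * Real.cos (π * w) + (2 / (3 * π)) * Real.sin (3 * π * w) : ℝ) : ℂ) := by
    have hI : Complex.I * Complex.I = -1 := Complex.I_mul_I
    have hcos' : 2 * E * Complex.cos ((π:ℂ) * w) = 1 + E ^ 2 := by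
      rw [hcos]; field_simp
    have hsin' : 2 * E ^ 3 * Complex.sin (3 * (π:ℂ) * w) = (E ^ 6 - 1) * Complex.I := by
      rw [hsin]; field_simp
    have hdiv : (1:ℂ) / (3 * (π:ℂ) * Complex.I) = -Complex.I / (3 * (π:ℂ)) := by
      rw [div_eq_div_iff (by simp [hπC, Complex.I_ne_zero]) (by simp [hπC])]
      linear_combination (3*(π:ℂ)) * hI
    unfold psi
    rw [h2, h4, h6, hdiv]
    push_cast
    linear_combination (-(1-(w:ℂ))*E^2) * hcos' - (1/(3*(π:ℂ))) * hsin'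

  rw [key, norm_mul, ← h3, Complex.norm_exp]
  have hre : (-3 * (π:ℂ) * Complex.I * w).re = 0 := by simp
  rw [hre, Real.exp_zero, one_mul, Complex.norm_real, Real.norm_eq_abs, abs_of_nonneg]
  have h1 : 0 ≤ Real.cos (π * w) := Real.cos_nonneg_of_mem_Icc ⟨by nlinarith, by nlinarith⟩
  have hsn : 0 ≤ Real.sin (3 * π * w) := Real.sin_nonneg_of_nonneg_of_le_pi (by nlinarith) (by nlinarith)
  have h3' : 0 ≤ 2 / (3 * π) := by positivity
  nlinarith
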